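/- Let A be an m × n real matrix, W an m × k real matrix, and H a k × n real matrix, with every entry of H strictly positive and (WᵀWH)_{ij} > 0 for all i, j. Define H' entrywise by H'_{ij} = H_{ij} · (WᵀA)_{ij} / (WᵀWH)_{ij}. Then H' = H if and only if WᵀA = WᵀWH, equivalently Wᵀ(A − WH) = 0; that is, a strictly positive H is a fixed point of the multiplicative update exactly when it is a stationary point of the divergence H ↦ ‖A − WH‖². -/

import Mathlib

open Matrix

/-- A strictly positive `H` is a fixed point of the Lee–Seung multiplicative
update exactly when `WᵀA = WᵀWH`, equivalently `Wᵀ(A - WH) = 0`, i.e. when `H`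
is a stationary point of the divergence `H ↦ ‖A - WH‖²`. -/
theorem nmf_H_update_fixed_point_iff_stationary
    {m n k : ℕ}
    (A : Matrix (Fin m) (Fin n) ℝ)
    (W : Matrix (Fin m) (Fin k) ℝ)
    (H : Matrix (Fin k) (Fin n) ℝ)
    (hH : ∀ i j, 0 < H i j)
    (hpos : ∀ i j, 0 < (Wᵀ * W * H) i j)
    (H' : Matrix (Fin k) (Fin n) ℝ)
    (hH' : ∀ i j, H' i j = H i j * (Wᵀ * A) i j / (Wᵀ * W * H) i j) :
    (H' = H ↔ Wᵀ * A = Wᵀ * W * H) ∧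
      (Wᵀ * A = Wᵀ * W * H ↔ Wᵀ * (A - W * H) = 0) := by
  constructor
  · constructor
    · intro h
      ext i j
      have h1 := congrFun (congrFun h i) j
      rw [hH' i j] at h1
      have hd := (hpos i j).ne'
      have hh := (hH i j).ne'
      field_simp at h1
      linarith
    · intro h
      ext i j
      rw [hH' i j, h]
      rw [mul_div_assoc, div_self (hpos i j).ne', mul_one]
  · constructor
    · intro h
      rw [Matrix.mul_sub, h, ← Matrix.mul_assoc, sub_self]
    · intro h
      have := congrArg (· + Wᵀ * (W * H)) h
      simp [Matrix.mul_sub, sub_add_cancel] at this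
      rw [this, Matrix.mul_assoc]
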